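/- Let f: R^M → R be differentiable with L-Lipschitz gradient, v a random vector in R^M, η > 0, and w' = w - ηv. Then E[f(w')] ≤ f(w) - (η/2)‖∇f(w)‖² - (η/2 - η²L/2)‖E[v]‖² + (η²L/2)E[‖v - E[v]‖²] + (η/2)‖E[v] - ∇f(w)‖². -/

import Mathlib

open MeasureTheory InnerProductSpace

local notation "⟪" x ", " y "⟫" => @inner ℝ _ _ x y

lemma descent_lemma_aux {M : ℕ} (f : EuclideanSpace ℝ (Fin M) → ℝ) (L : ℝ)
    (hf : Differentiable ℝ f)
    (hL : ∀ w₁ w₂, ‖gradient f w₁ - gradient f w₂‖ ≤ L * ‖w₁ - w₂‖)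
    (x y : EuclideanSpace ℝ (Fin M)) :
    f y ≤ f x + ⟪gradient f x, y - x⟫ + L / 2 * ‖y - x‖ ^ 2 := by
  set g := gradient f with hg
  have hglip : LipschitzWith (Real.toNNReal (max L 0)) g := by
    apply LipschitzWith.of_dist_le_mul
    intro a b
    simp only [dist_eq_norm]
    calc ‖g a - g b‖ ≤ L * ‖a - b‖ := hL a b
      _ ≤ max L 0 * ‖a - b‖ := by
          gcongr; exact le_max_left _ _
      _ = Real.toNNReal (max L 0) * ‖a - b‖ := by
          rw [Real.coe_toNNReal _ (le_max_right _ _)]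
  have hgcont : Continuous g := hglip.continuous
  have hline : Continuous (fun t : ℝ => x + t • (y - x)) :=
    continuous_const.add (continuous_id.smul continuous_const)
  have key : ∀ t : ℝ, HasDerivAt (fun t : ℝ => f (x + t • (y - x)))
      ⟪g (x + t • (y - x)), y - x⟫ t := by
    intro t
    have h1 : HasDerivAt (fun t : ℝ => x + t • (y - x)) (y - x) t := by
      simpa using ((hasDerivAt_id t).smul_const (y - x)).const_add x
    have h2 := ((hf (x + t • (y - x))).hasGradientAt).hasFDerivAt
    have h3 := h2.comp_hasDerivAt t h1
    simpa only [Function.comp_def, InnerProductSpace.toDual_apply_apply] using h3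
  have hφ'cont : Continuous (fun t : ℝ => ⟪g (x + t • (y - x)), y - x⟫) :=
    (hgcont.comp hline).inner continuous_const
  have hubcont : Continuous (fun t : ℝ => ⟪g x, y - x⟫ + L * ‖y - x‖ ^ 2 * t) :=
    continuous_const.add (continuous_const.mul continuous_id)
  have hFTC := intervalIntegral.integral_eq_sub_of_hasDerivAt
    (f := fun t : ℝ => f (x + t • (y - x)))
    (f' := fun t : ℝ => ⟪g (x + t • (y - x)), y - x⟫)
    (a := 0) (b := 1)
    (fun t _ => key t) (hφ'cont.intervalIntegrable 0 1)
  have hmono : ∫ t in (0:ℝ)..1, ⟪g (x + t • (y - x)), y - x⟫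
      ≤ ∫ t in (0:ℝ)..1, (⟪g x, y - x⟫ + L * ‖y - x‖ ^ 2 * t) := by
    apply intervalIntegral.integral_mono_on (by norm_num)
    · exact hφ'cont.intervalIntegrable 0 1
    · exact hubcont.intervalIntegrable 0 1
    · intro t ht
      have hterm : ⟪g (x + t • (y - x)), y - x⟫
          = ⟪g x, y - x⟫ + ⟪g (x + t • (y - x)) - g x, y - x⟫ := by
        rw [inner_sub_left]; ring
      rw [hterm]
      gcongr _ + ?_
      calc ⟪g (x + t • (y - x)) - g x, y - x⟫
          ≤ ‖g (x + t • (y - x)) - g x‖ * ‖y - x‖ := real_inner_le_norm _ _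
        _ ≤ (L * ‖x + t • (y - x) - x‖) * ‖y - x‖ :=
            mul_le_mul_of_nonneg_right (hL _ _) (norm_nonneg _)
        _ = L * ‖y - x‖ ^ 2 * t := by
            have h4 : x + t • (y - x) - x = t • (y - x) := by abel
            rw [h4, norm_smul, Real.norm_eq_abs, abs_of_nonneg ht.1]
            ring
  have hval : ∫ t in (0:ℝ)..1, (⟪g x, y - x⟫ + L * ‖y - x‖ ^ 2 * t)
      = ⟪g x, y - x⟫ + L / 2 * ‖y - x‖ ^ 2 := by
    have hii : IntervalIntegrable (fun t : ℝ => L * ‖y - x‖ ^ 2 * t)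
        MeasureTheory.volume 0 1 := by
      apply Continuous.intervalIntegrable
      exact continuous_const.mul continuous_id
    rw [intervalIntegral.integral_add intervalIntegrable_const hii,
      intervalIntegral.integral_const_mul, integral_id]
    simp; ring
  rw [hFTC, hval] at hmono
  have hfin : f y - f x ≤ ⟪g x, y - x⟫ + L / 2 * ‖y - x‖ ^ 2 := by
    simpa using hmono
  linarith

theorem one_round_progress
    {M : ℕ} {Ω : Type*} [MeasureSpace Ω] (μ : Measure Ω) [IsProbabilityMeasure μ]
    (f : EuclideanSpace ℝ (Fin M) → ℝ) (L : ℝ)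
    (hf : Differentiable ℝ f)
    (hL : ∀ w₁ w₂, ‖gradient f w₁ - gradient f w₂‖ ≤ L * ‖w₁ - w₂‖)
    (v : Ω → EuclideanSpace ℝ (Fin M))
    (hv : Integrable v μ)
    (hv2 : Integrable (fun ω => ‖v ω‖^2) μ)
    (w : EuclideanSpace ℝ (Fin M)) (η : ℝ) (hη : 0 < η)
    (w' : Ω → EuclideanSpace ℝ (Fin M))
    (hw' : ∀ ω, w' ω = w - η • v ω)
    (hfw' : Integrable (fun ω => f (w' ω)) μ) :
    ∫ ω, f (w' ω) ∂μ
      ≤ f w - (η/2) * ‖gradient f w‖^2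
        - (η/2 - η^2 * L / 2) * ‖∫ ω, v ω ∂μ‖^2
        + (η^2 * L / 2) * ∫ ω, ‖v ω - ∫ ω', v ω' ∂μ‖^2 ∂μ
        + (η/2) * ‖(∫ ω, v ω ∂μ) - gradient f w‖^2 := by
  set g := gradient f w with hg
  set vb := ∫ ω, v ω ∂μ with hvb
  have hpt : ∀ ω, f (w' ω) ≤ f w + (- η * ⟪g, v ω⟫ + η^2 * L / 2 * ‖v ω‖^2) := by
    intro ω
    have hd := descent_lemma_aux f L hf hL w (w' ω)
    rw [hw' ω] at hd ⊢
    have h1 : w - η • v ω - w = (-η) • v ω := by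
      rw [neg_smul]; abel
    rw [h1] at hd
    calc f (w - η • v ω) ≤ f w + ⟪g, (-η) • v ω⟫ + L / 2 * ‖(-η) • v ω‖^2 := hd
      _ = f w + (- η * ⟪g, v ω⟫ + η^2 * L / 2 * ‖v ω‖^2) := by
          rw [real_inner_smul_right, norm_smul, Real.norm_eq_abs, mul_pow, sq_abs]
          ring
  have hinner : Integrable (fun ω => ⟪g, v ω⟫) μ :=
    ContinuousLinearMap.integrable_comp (innerSL ℝ g) hv
  have hinnervb : Integrable (fun ω => ⟪vb, v ω⟫) μ :=
    ContinuousLinearMap.integrable_comp (innerSL ℝ vb) hv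
  have hA : Integrable (fun ω => - η * ⟪g, v ω⟫ + η^2 * L / 2 * ‖v ω‖^2) μ :=
    (hinner.const_mul _).add (hv2.const_mul _)
  have hRHSint : Integrable (fun ω => f w + (- η * ⟪g, v ω⟫ + η^2 * L / 2 * ‖v ω‖^2)) μ :=
    (integrable_const _).add hA
  have hint : ∫ ω, f (w' ω) ∂μ
      ≤ ∫ ω, (f w + (- η * ⟪g, v ω⟫ + η^2 * L / 2 * ‖v ω‖^2)) ∂μ :=
    integral_mono hfw' hRHSint (fun ω => hpt ω)
  have hIeq : ∫ ω, ⟪g, v ω⟫ ∂μ = ⟪g, vb⟫ := by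
    have h := (ContinuousLinearMap.integral_comp_comm (innerSL ℝ g) hv).symm
    simp only [innerSL_apply_apply] at h
    exact h.symm
  have hIvbeq : ∫ ω, ⟪vb, v ω⟫ ∂μ = ⟪vb, vb⟫ := by
    have h := (ContinuousLinearMap.integral_comp_comm (innerSL ℝ vb) hv).symm
    simp only [innerSL_apply_apply] at h
    exact h.symm
  have hsplit : ∫ ω, (f w + (- η * ⟪g, v ω⟫ + η^2 * L / 2 * ‖v ω‖^2)) ∂μ
      = f w + (- η * ⟪g, vb⟫ + η^2 * L / 2 * ∫ ω, ‖v ω‖^2 ∂μ) := by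
    rw [integral_add (integrable_const _) hA,
      integral_add (hinner.const_mul _) (hv2.const_mul _),
      integral_const_mul, integral_const_mul, hIeq]
    simp
  have hvar : ∫ ω, ‖v ω - vb‖^2 ∂μ = (∫ ω, ‖v ω‖^2 ∂μ) - ‖vb‖^2 := by
    have hptv : ∀ ω, ‖v ω - vb‖^2 = ‖v ω‖^2 + (-2 * ⟪vb, v ω⟫ + ‖vb‖^2) := by
      intro ω
      rw [norm_sub_sq_real, real_inner_comm]
      ring
    have hB : Integrable (fun ω => -2 * ⟪vb, v ω⟫ + ‖vb‖^2) μ :=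
      (hinnervb.const_mul _).add (integrable_const _)
    calc ∫ ω, ‖v ω - vb‖^2 ∂μ
        = ∫ ω, (‖v ω‖^2 + (-2 * ⟪vb, v ω⟫ + ‖vb‖^2)) ∂μ :=
          integral_congr_ae (Filter.Eventually.of_forall hptv)
      _ = (∫ ω, ‖v ω‖^2 ∂μ) + (-2 * ⟪vb, vb⟫ + ‖vb‖^2) := by
          rw [integral_add hv2 hB,
            integral_add (hinnervb.const_mul _) (integrable_const _),
            integral_const_mul, hIvbeq]
          simp
      _ = (∫ ω, ‖v ω‖^2 ∂μ) - ‖vb‖^2 := by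
          rw [real_inner_self_eq_norm_sq]; ring
  have hIP : 2 * ⟪g, vb⟫ = ‖vb‖^2 + ‖g‖^2 - ‖vb - g‖^2 := by
    rw [norm_sub_sq_real, real_inner_comm]
    ring
  calc ∫ ω, f (w' ω) ∂μ
      ≤ f w + (- η * ⟪g, vb⟫ + η^2 * L / 2 * ∫ ω, ‖v ω‖^2 ∂μ) := by
        rw [← hsplit]; exact hint
    _ = f w - (η/2) * ‖g‖^2 - (η/2 - η^2 * L / 2) * ‖vb‖^2
        + (η^2 * L / 2) * ∫ ω, ‖v ω - vb‖^2 ∂μ + (η/2) * ‖vb - g‖^2 := by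
        rw [hvar]
        linear_combination (- η / 2) * hIP
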